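/- Let μ be a positive finite measure on ℝ whose support is minorized or majorized (contained in (a,∞) or (−∞,a)), with finite moments of order 0,...,q−1, and suppose lim_{y→0⁺} ∫ t^q/(1+y²t²) dμ(t) exists and is finite. Then ∫ |t|^q dμ(t) < ∞ provided q is even, or the support hypothesis holds. -/

import Mathlib

open MeasureTheory Filter Set

private lemma denom_pos' (y t : ℝ) : 0 < 1 + y ^ 2 * t ^ 2 := by positivity

private lemma g_cont' (y : ℝ) (q : ℕ) :
    Continuous (fun t : ℝ => t ^ q / (1 + y ^ 2 * t ^ 2)) :=
  (continuous_pow q).div (by continuity) (fun t => (denom_pos' y t).ne')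

private lemma g_integrable' (μ : Measure ℝ) [IsFiniteMeasure μ] (q : ℕ) (hq : 1 ≤ q)
    (hmom : ∀ l < q, Integrable (fun t : ℝ => |t| ^ l) μ) {y : ℝ} (hy : 0 < y) :
    Integrable (fun t : ℝ => t ^ q / (1 + y ^ 2 * t ^ 2)) μ := by
  have h1 : Integrable (fun t : ℝ => (1 / (2 * y)) * |t| ^ (q - 1)) μ :=
    (hmom (q - 1) (by omega)).const_mul _
  refine h1.mono ((g_cont' y q).aestronglyMeasurable) (ae_of_all _ fun t => ?_)
  have hd := denom_pos' y t
  have h2y : (0:ℝ) < 2 * y := by linarith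
  rw [Real.norm_eq_abs, Real.norm_eq_abs, abs_div, abs_pow, abs_of_pos hd]
  have habs : |(1 / (2 * y)) * |t| ^ (q - 1)| = (1 / (2 * y)) * |t| ^ (q - 1) := by
    rw [abs_of_nonneg]; positivity
  rw [habs]
  have hpow : |t| ^ q = |t| ^ (q - 1) * |t| := by
    rw [← pow_succ]; congr 1; omega
  rw [hpow, div_le_iff₀ hd]
  have key : 2 * y * |t| ≤ 1 + y ^ 2 * t ^ 2 := by
    nlinarith [sq_nonneg (1 - y * |t|), sq_abs t, abs_nonneg t]
  have hb : |t| ≤ (1 / (2 * y)) * (1 + y ^ 2 * t ^ 2) := by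
    rw [one_div, inv_mul_eq_div, le_div_iff₀ h2y]; linarith
  calc |t| ^ (q - 1) * |t| ≤ |t| ^ (q - 1) * ((1 / (2 * y)) * (1 + y ^ 2 * t ^ 2)) :=
        mul_le_mul_of_nonneg_left hb (by positivity)
    _ = 1 / (2 * y) * |t| ^ (q - 1) * (1 + y ^ 2 * t ^ 2) := by ring

private lemma case_Iic' (μ : Measure ℝ) [IsFiniteMeasure μ] (a : ℝ)
    (h : μ (Set.Iic a) = 0) (q : ℕ) (hq : 1 ≤ q)
    (hmom : ∀ l < q, Integrable (fun t : ℝ => |t| ^ l) μ)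
    (L : ℝ)
    (hlim : Tendsto (fun y : ℝ => ∫ t : ℝ, t ^ q / (1 + y ^ 2 * t ^ 2) ∂μ)
      (nhdsWithin 0 (Set.Ioi (0:ℝ))) (nhds L)) :
    Integrable (fun t : ℝ => |t| ^ q) μ := by
  -- the sequence of parameters
  set y : ℕ → ℝ := fun n => 1 / (n + 1) with hy_def
  have hy : ∀ n, 0 < y n := fun n => by positivity
  have hyt : Tendsto y atTop (nhdsWithin 0 (Set.Ioi (0:ℝ))) := by
    rw [tendsto_nhdsWithin_iff]
    exact ⟨tendsto_one_div_add_atTop_nhds_zero_nat, Eventually.of_forall fun n => hy n⟩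
  have hyanti : ∀ {n m : ℕ}, n ≤ m → y m ≤ y n := by
    intro n m hnm
    apply one_div_le_one_div_of_le (by positivity)
    have : (n:ℝ) ≤ m := Nat.cast_le.mpr hnm
    linarith
  set g : ℕ → ℝ → ℝ := fun n t => t ^ q / (1 + (y n) ^ 2 * t ^ 2) with hg_def
  have hint : ∀ n, Integrable (g n) μ := fun n => g_integrable' μ q hq hmom (hy n)
  set I : ℕ → ℝ := fun n => ∫ t, g n t ∂μ with hI_def
  have hItend : Tendsto I atTop (nhds L) := hlim.comp hyt
  obtain ⟨M, hM⟩ := hItend.bddAbove_range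
  have hM' : ∀ n, I n ≤ M := fun n => hM ⟨n, rfl⟩
  -- a.e. t > a
  have haae : ∀ᵐ t ∂μ, a < t := by
    rw [ae_iff]
    convert h using 2
    ext t; simp [not_lt]
  -- bound on the integral over Iic 0
  set B : ℝ := |a| ^ q * (μ Set.univ).toReal with hB_def
  have hB0 : 0 ≤ B := by positivity
  have Hneg : ∀ n, |∫ t in Set.Iic 0, g n t ∂μ| ≤ B := by
    intro n
    have hbd : ∀ᵐ t ∂μ.restrict (Set.Iic 0), ‖g n t‖ ≤ |a| ^ q := by
      filter_upwards [ae_restrict_of_ae haae, ae_restrict_mem measurableSet_Iic]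
        with t hat ht
      have hta : |t| ≤ |a| := by
        rw [abs_of_nonpos ht]
        calc -t ≤ -a := by linarith
          _ ≤ |a| := neg_le_abs a
      have hd := denom_pos' (y n) t
      rw [Real.norm_eq_abs, abs_div, abs_pow, abs_of_pos hd]
      calc |t| ^ q / (1 + (y n) ^ 2 * t ^ 2) ≤ |t| ^ q / 1 :=
            div_le_div_of_nonneg_left (by positivity) one_pos (by nlinarith [sq_nonneg ((y n) * t)])
        _ = |t| ^ q := div_one _
        _ ≤ |a| ^ q := pow_le_pow_left₀ (abs_nonneg t) hta q
    calc |∫ t in Set.Iic 0, g n t ∂μ| = ‖∫ t in Set.Iic 0, g n t ∂μ‖ := rfl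
      _ ≤ |a| ^ q * (μ.restrict (Set.Iic 0) Set.univ).toReal :=
          norm_integral_le_of_norm_le_const hbd
      _ = |a| ^ q * (μ (Set.Iic 0)).toReal := by rw [Measure.restrict_apply_univ]
      _ ≤ B := mul_le_mul_of_nonneg_left
          (ENNReal.toReal_mono (measure_ne_top μ _) (measure_mono (Set.subset_univ _)))
          (by positivity)
  -- integral over Ioi 0 is bounded
  have Hpos : ∀ n, ∫ t in Set.Ioi 0, g n t ∂μ ≤ M + B := by
    intro n
    have hsplit := integral_add_compl (s := Set.Iic (0:ℝ)) measurableSet_Iic (hint n)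
    rw [Set.compl_Iic] at hsplit
    have : ∫ t in Set.Ioi (0:ℝ), g n t ∂μ = I n - ∫ t in Set.Iic 0, g n t ∂μ := by
      rw [hI_def]; linarith [hsplit]
    rw [this]
    have h1 := abs_le.mp (Hneg n)
    linarith [hM' n, h1.1]
  -- monotone convergence on the positive side
  set F : ℕ → ℝ → ENNReal := fun n t => ENNReal.ofReal (g n t) with hF_def
  have hFmeas : ∀ n, Measurable (F n) :=
    fun n => (ENNReal.measurable_ofReal).comp (g_cont' (y n) q).measurable
  have hFmono : Monotone F := by
    intro n m hnm t
    rcases le_or_gt (t ^ q) 0 with htq | htq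
    · simp only [hF_def, hg_def]
      rw [ENNReal.ofReal_of_nonpos (div_nonpos_of_nonpos_of_nonneg htq (denom_pos' (y n) t).le)]
      exact zero_le
    · apply ENNReal.ofReal_le_ofReal
      apply div_le_div_of_nonneg_left htq.le (denom_pos' (y m) t)
      have : (y m) ^ 2 ≤ (y n) ^ 2 := by
        have := hyanti hnm
        nlinarith [hy m, hy n]
      nlinarith [sq_nonneg t]
  have hFsup : ∀ t : ℝ, 0 < t → ⨆ n, F n t = ENNReal.ofReal (t ^ q) := by
    intro t ht
    have htend : Tendsto (fun n => F n t) atTop (nhds (ENNReal.ofReal (t ^ q))) := by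
      apply (ENNReal.continuous_ofReal.tendsto _).comp
      have hd : Tendsto (fun n => 1 + (y n) ^ 2 * t ^ 2) atTop (nhds 1) := by
        have : Tendsto y atTop (nhds 0) := hyt.mono_right nhdsWithin_le_nhds
        have := ((this.pow 2).mul_const (t ^ 2)).const_add 1
        simpa using this
      have := (tendsto_const_nhds (x := t ^ q) (f := atTop)).div hd one_ne_zero
      rw [div_one] at this; exact this
    have hmono : Monotone fun n => F n t := fun n m hnm => hFmono hnm t
    exact tendsto_nhds_unique (tendsto_atTop_iSup hmono) htend
  -- main finiteness
  have hcont : Continuous (fun t : ℝ => |t| ^ q) := (continuous_pow q).comp continuous_abs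
  refine ⟨hcont.aestronglyMeasurable, ?_⟩
  rw [hasFiniteIntegral_iff_ofReal (ae_of_all _ fun t => by positivity)]
  rw [← lintegral_add_compl (fun t => ENNReal.ofReal (|t| ^ q)) (measurableSet_Iic (a := (0:ℝ)))]
  rw [Set.compl_Iic]
  have part1 : ∫⁻ t in Set.Iic 0, ENNReal.ofReal (|t| ^ q) ∂μ < ⊤ := by
    have hbd : ∀ᵐ t ∂μ.restrict (Set.Iic 0),
        ENNReal.ofReal (|t| ^ q) ≤ ENNReal.ofReal (|a| ^ q) := by
      filter_upwards [ae_restrict_of_ae haae, ae_restrict_mem measurableSet_Iic]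
        with t hat ht
      apply ENNReal.ofReal_le_ofReal
      apply pow_le_pow_left₀ (abs_nonneg t)
      rw [abs_of_nonpos ht]
      calc -t ≤ -a := by linarith
        _ ≤ |a| := neg_le_abs a
    calc ∫⁻ t in Set.Iic 0, ENNReal.ofReal (|t| ^ q) ∂μ
        ≤ ∫⁻ _ in Set.Iic 0, ENNReal.ofReal (|a| ^ q) ∂μ := lintegral_mono_ae hbd
      _ = ENNReal.ofReal (|a| ^ q) * μ (Set.Iic 0) := setLIntegral_const _ _
      _ < ⊤ := ENNReal.mul_lt_top ENNReal.ofReal_lt_top (measure_lt_top μ _)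
  have part2 : ∫⁻ t in Set.Ioi 0, ENNReal.ofReal (|t| ^ q) ∂μ ≤ ENNReal.ofReal (M + B) := by
    have e1 : ∫⁻ t in Set.Ioi 0, ENNReal.ofReal (|t| ^ q) ∂μ
        = ∫⁻ t in Set.Ioi 0, ⨆ n, F n t ∂μ := by
      apply setLIntegral_congr_fun measurableSet_Ioi
      intro t ht
      dsimp only
      rw [hFsup t ht, abs_of_pos ht]
    rw [e1, lintegral_iSup (fun n => hFmeas n) hFmono]
    apply iSup_le
    intro n
    have hnn : 0 ≤ᵐ[μ.restrict (Set.Ioi 0)] g n := by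
      filter_upwards [ae_restrict_mem measurableSet_Ioi] with t ht
      exact div_nonneg (pow_nonneg ht.le q) (denom_pos' (y n) t).le
    rw [← ofReal_integral_eq_lintegral_ofReal ((hint n).restrict) hnn]
    exact ENNReal.ofReal_le_ofReal (Hpos n)
  calc ∫⁻ t in Set.Iic 0, ENNReal.ofReal (|t| ^ q) ∂μ
        + ∫⁻ t in Set.Ioi 0, ENNReal.ofReal (|t| ^ q) ∂μ
      ≤ ∫⁻ t in Set.Iic 0, ENNReal.ofReal (|t| ^ q) ∂μ + ENNReal.ofReal (M + B) :=
        add_le_add le_rfl part2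
    _ < ⊤ := ENNReal.add_lt_top.mpr ⟨part1, ENNReal.ofReal_lt_top⟩

/-- Let `μ` be a positive finite measure on `ℝ` whose support is minorized or majorized,
with finite moments of orders `0,…,q-1`, and such that
`lim_{y→0⁺} ∫ t^q/(1+y²t²) dμ(t)` exists and is finite.  Then `∫ |t|^q dμ(t) < ∞`. -/
theorem finite_qth_moment_of_limit
    (μ : Measure ℝ) [IsFiniteMeasure μ] (a : ℝ)
    (hsupp : μ (Set.Iic a) = 0 ∨ μ (Set.Ici a) = 0)
    (q : ℕ)
    (hmom : ∀ l < q, Integrable (fun t : ℝ => |t| ^ l) μ)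
    (L : ℝ)
    (hlim : Tendsto (fun y : ℝ => ∫ t : ℝ, t ^ q / (1 + y ^ 2 * t ^ 2) ∂μ)
      (nhdsWithin 0 (Set.Ioi (0:ℝ))) (nhds L)) :
    Integrable (fun t : ℝ => |t| ^ q) μ := by
  rcases Nat.eq_zero_or_pos q with hq0 | hq
  · subst hq0; simpa using integrable_const (1:ℝ)
  rcases hsupp with hIic | hIci
  · exact case_Iic' μ a hIic q hq hmom L hlim
  · -- reflect: use the pushforward under negation
    set ν : Measure ℝ := μ.map (fun t : ℝ => -t) with hν_def
    have me : MeasurableEmbedding (fun t : ℝ => -t) :=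
      (Homeomorph.neg ℝ).isClosedEmbedding.measurableEmbedding
    haveI : IsFiniteMeasure ν := by
      constructor
      rw [hν_def, Measure.map_apply measurable_neg MeasurableSet.univ]
      exact measure_lt_top μ _
    have hν0 : ν (Set.Iic (-a)) = 0 := by
      rw [hν_def, Measure.map_apply measurable_neg measurableSet_Iic]
      convert hIci using 2
      ext t; simp
    have hmomν : ∀ l < q, Integrable (fun t : ℝ => |t| ^ l) ν := by
      intro l hl
      rw [hν_def, me.integrable_map_iff]
      have he : ((fun t : ℝ => |t| ^ l) ∘ fun t : ℝ => -t) = fun t : ℝ => |t| ^ l := by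
        funext t; simp
      rw [he]; exact hmom l hl
    have hlimν : Tendsto (fun y : ℝ => ∫ t : ℝ, t ^ q / (1 + y ^ 2 * t ^ 2) ∂ν)
        (nhdsWithin 0 (Set.Ioi (0:ℝ))) (nhds ((-1:ℝ) ^ q * L)) := by
      have he : ∀ y : ℝ, ∫ t : ℝ, t ^ q / (1 + y ^ 2 * t ^ 2) ∂ν
          = (-1:ℝ) ^ q * ∫ t : ℝ, t ^ q / (1 + y ^ 2 * t ^ 2) ∂μ := by
        intro y
        rw [hν_def, me.integral_map]
        rw [← integral_const_mul]
        congr 1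
        ext t
        rw [neg_pow t q, neg_sq, mul_div_assoc]
      simp only [he]
      exact hlim.const_mul _
    have := case_Iic' ν (-a) hν0 q hq hmomν _ hlimν
    rw [hν_def, me.integrable_map_iff] at this
    have he : ((fun t : ℝ => |t| ^ q) ∘ fun t : ℝ => -t) = fun t : ℝ => |t| ^ q := by
      funext t; simp
    rwa [he] at this
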